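/- Let H be a real Hilbert space, f : H → ℝ ∪ {+∞} a proper closed convex function which is bounded below, and S_f an affine support set of f. Suppose that either 0 ∈ S_f or the minimizer (a*, v*) of ‖(a, v)‖² over S_f satisfies a* > 0. Then f(x) ≥ 0 for all x ∈ H. Moreover, in the case a* > 0 one has inf_{x ∈ H} f(x) > 0. -/

import Mathlib

/-- if f is bounded below and either 0 ∈ S_f or the minimal-norm element
(a*, v*) of S_f has a* > 0, then f ≥ 0; moreover if a* > 0 then inf f > 0. -/
theorem zero_mem_or_pos_imp_nonneg
    {H : Type*} [NormedAddCommGroup H] [InnerProductSpace ℝ H] [CompleteSpace H]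
    (f : H → EReal) (S : Set (ℝ × H))
    (hproper_top : ∃ x, f x ≠ ⊤) (hproper_bot : ∀ x, f x ≠ ⊥)
    (hlsc : LowerSemicontinuous f)
    (hconv : Convex ℝ {p : H × ℝ | f p.1 ≤ (p.2 : EReal)})
    (hSclosed : IsClosed S) (hSconv : Convex ℝ S)
    (hrep : ∀ x, f x = ⨆ p ∈ S, ((p.1 + inner ℝ p.2 x : ℝ) : EReal))
    (hbdd : ∃ c : ℝ, ∀ x, (c : EReal) ≤ f x)
    (pstar : ℝ × H) (hpmem : pstar ∈ S)
    (hpmin : ∀ q ∈ S, pstar.1 ^ 2 + ‖pstar.2‖ ^ 2 ≤ q.1 ^ 2 + ‖q.2‖ ^ 2)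
    (hyp : (0 : ℝ × H) ∈ S ∨ 0 < pstar.1) :
    (∀ x, (0 : EReal) ≤ f x)
      ∧ (0 < pstar.1 → ∃ γ : ℝ, 0 < γ ∧ ∀ x, (γ : EReal) ≤ f x) := by
  obtain ⟨c, hc⟩ := hbdd
  -- variational inequality for the norm minimizer
  have hvar : ∀ q ∈ S, pstar.1 ^ 2 + ‖pstar.2‖ ^ 2
      ≤ pstar.1 * q.1 + inner ℝ pstar.2 q.2 := by
    intro q hq
    by_contra hcon
    push_neg at hcon
    set R : ℝ := pstar.1 ^ 2 + ‖pstar.2‖ ^ 2 with hRdef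
    set P : ℝ := pstar.1 * q.1 + inner ℝ pstar.2 q.2 with hPdef
    set E : ℝ := (q.1 - pstar.1) ^ 2 + ‖q.2 - pstar.2‖ ^ 2 with hEdef
    have hE0 : 0 ≤ E := by positivity
    have hRP : 0 < R - P := by linarith
    set θ : ℝ := min 1 ((R - P) / (E + 1)) with hθdef
    have hθpos : 0 < θ := lt_min one_pos (by positivity)
    have hθ1 : θ ≤ 1 := min_le_left _ _
    have hθE : θ * (E + 1) ≤ R - P := by
      have h := min_le_right 1 ((R - P) / (E + 1))
      have hE1 : (0:ℝ) < E + 1 := by linarith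
      calc θ * (E + 1) ≤ ((R - P) / (E + 1)) * (E + 1) := by
            exact mul_le_mul_of_nonneg_right h hE1.le
        _ = R - P := by field_simp
    have hmem := hSconv hpmem hq (by linarith : (0:ℝ) ≤ 1 - θ) hθpos.le (by ring)
    have hkey := hpmin _ hmem
    have hfst : ((1 - θ) • pstar + θ • q).1 = (1 - θ) * pstar.1 + θ * q.1 := rfl
    have hsnd : ((1 - θ) • pstar + θ • q).2 = (1 - θ) • pstar.2 + θ • q.2 := rfl
    rw [hfst, hsnd] at hkey
    have hnorm : ‖(1 - θ) • pstar.2 + θ • q.2‖ ^ 2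
        = (1 - θ)^2 * ‖pstar.2‖^2 + 2 * ((1-θ)*θ) * inner ℝ pstar.2 q.2
          + θ^2 * ‖q.2‖^2 := by
      rw [norm_add_sq_real, norm_smul, norm_smul, real_inner_smul_left,
        real_inner_smul_right]
      simp only [Real.norm_eq_abs, mul_pow, sq_abs]
      ring
    rw [hnorm] at hkey
    have hsub : ‖q.2 - pstar.2‖ ^ 2
        = ‖q.2‖^2 - 2 * inner ℝ pstar.2 q.2 + ‖pstar.2‖^2 := by
      rw [norm_sub_sq_real, real_inner_comm]
    -- hkey says 0 ≤ 2θ(P-R) + θ²E, but θE ≤ R - P - θ gives a contradiction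
    nlinarith [mul_pos hθpos hRP, sq_nonneg θ, mul_le_mul_of_nonneg_left hθE hθpos.le,
      hsub, hkey]
  -- main positivity lemma for the case pstar.1 > 0
  have hmain : 0 < pstar.1 → ∃ γ : ℝ, 0 < γ ∧ ∀ x, (γ : EReal) ≤ f x := by
    intro hA
    set A : ℝ := pstar.1 with hAdef
    have hAne : A ≠ 0 := ne_of_gt hA
    set R : ℝ := pstar.1 ^ 2 + ‖pstar.2‖ ^ 2 with hRdef
    have hR : 0 < R := by nlinarith [pow_pos hA 2, sq_nonneg ‖pstar.2‖]
    refine ⟨R / (2 * A), by positivity, ?_⟩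
    intro x
    by_contra hlt
    push_neg at hlt
    have hne_top : f x ≠ ⊤ := by
      intro h
      rw [h] at hlt
      exact absurd hlt (by simp)
    set ε : ℝ := (f x).toReal with hεdef
    have hfx : f x = (ε : EReal) := (EReal.coe_toReal hne_top (hproper_bot x)).symm
    have hεγ : ε < R / (2 * A) := by
      rw [hfx] at hlt
      exact_mod_cast hlt
    have hεγ' : ε * (2 * A) < R := (lt_div_iff₀ (by positivity)).mp hεγ
    have hcε : c ≤ ε := by
      have h := hc x
      rw [hfx] at h
      exact_mod_cast h
    have hub : ∀ q ∈ S, q.1 + inner ℝ q.2 x ≤ ε := by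
      intro q hq
      have h : ((q.1 + inner ℝ q.2 x : ℝ) : EReal) ≤ ⨆ p ∈ S, ((p.1 + inner ℝ p.2 x : ℝ) : EReal) :=
        le_biSup (fun p : ℝ × H => ((p.1 + inner ℝ p.2 x : ℝ) : EReal)) hq
      rw [← hrep x, hfx] at h
      exact_mod_cast h
    have hεc : (0:ℝ) < ε + 1 - c := by linarith
    set t : ℝ := 2 * A * (ε + 1 - c) / R + 1 with htdef
    have ht : 0 < t := by positivity
    have ht' : t * R = 2 * A * (ε + 1 - c) + R := by
      rw [htdef]
      field_simp
    set y : H := x + t • (x - A⁻¹ • pstar.2) with hydef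
    have hy : ((c - 1 : ℝ) : EReal) < f y := by
      refine lt_of_lt_of_le ?_ (hc y)
      exact_mod_cast (by linarith : c - 1 < c)
    rw [hrep y, lt_iSup_iff] at hy
    obtain ⟨q, hq⟩ := hy
    rw [lt_iSup_iff] at hq
    obtain ⟨hqS, hq⟩ := hq
    have h3 : c - 1 < q.1 + inner ℝ q.2 y := by exact_mod_cast hq
    have hinner : (inner ℝ q.2 y : ℝ)
        = inner ℝ q.2 x + t * (inner ℝ q.2 x - A⁻¹ * inner ℝ q.2 pstar.2) := by
      rw [hydef, inner_add_right, inner_smul_right, inner_sub_right, inner_smul_right]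
    rw [hinner] at h3
    have h1 : q.1 + inner ℝ q.2 x ≤ ε := hub q hqS
    have h2 : R ≤ A * q.1 + inner ℝ q.2 pstar.2 := by
      have h := hvar q hqS
      have hcomm : (inner ℝ pstar.2 q.2 : ℝ) = inner ℝ q.2 pstar.2 := real_inner_comm _ _
      linarith
    -- multiply h3 by A
    have h3A : A * (c - 1) < A * q.1 + A * inner ℝ q.2 x
        + t * (A * inner ℝ q.2 x - inner ℝ q.2 pstar.2) := by
      have h := mul_lt_mul_of_pos_left h3 hA
      have heq : A * (q.1 + (inner ℝ q.2 x + t * (inner ℝ q.2 x - A⁻¹ * inner ℝ q.2 pstar.2)))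
          = A * q.1 + A * inner ℝ q.2 x + t * (A * inner ℝ q.2 x - inner ℝ q.2 pstar.2) := by
        field_simp
        ring
      rw [heq] at h
      exact h
    -- derive t * (R - A * ε) < A * (ε + 1 - c)
    have hstep : t * (R - A * ε) < A * (ε + 1 - c) := by
      nlinarith [mul_le_mul_of_nonneg_left h1 (mul_pos ht hA).le,
        mul_le_mul_of_nonneg_left h2 ht.le,
        mul_le_mul_of_nonneg_left h1 hA.le]
    -- but 2(R - Aε) > R and t*R = 2A(ε+1-c)+R give a contradiction
    nlinarith [mul_pos ht (show (0:ℝ) < R - ε * (2*A) by linarith)]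
  constructor
  · intro x
    rcases hyp with h0 | hA
    · have h : (((0 : ℝ × H).1 + inner ℝ (0 : ℝ × H).2 x : ℝ) : EReal)
          ≤ ⨆ p ∈ S, ((p.1 + inner ℝ p.2 x : ℝ) : EReal) :=
        le_biSup (fun p : ℝ × H => ((p.1 + inner ℝ p.2 x : ℝ) : EReal)) h0
      rw [← hrep x] at h
      simpa using h
    · obtain ⟨γ, hγpos, hγ⟩ := hmain hA
      refine le_trans ?_ (hγ x)
      exact_mod_cast hγpos.le
  · exact hmain
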